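/- Let C_n be the bidirected cycle on vertices v₀,…,v_{n−1} (indices modulo n), where every clockwise edge (v_i, v_{i+1}) has weight p > 0 and every counterclockwise edge (v_i, v_{i−1}) has weight q > 0. If the initial blue set B₀ consists of k consecutive vertices of the cycle, 1 ≤ k ≤ n, then ept_rzf(C_n, B₀) = n − k. In particular the expected propagation time is independent of p and q. -/

import Mathlib

open scoped ENNReal NNReal

namespace RZF

variable {V : Type*} [Fintype V] [DecidableEq V]

/-- Probability that the white vertex `x` turns blue in one round of weighted
randomized zero forcing with weights `w`, given the current blue set `B`
(`0` when the total incoming weight of `x` is `0`). -/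
noncomputable def turnProb (w : V → V → ℝ≥0) (B : Finset V) (x : V) : ℝ≥0 :=
  (∑ u ∈ B, w u x) / ∑ u, w u x

/-- One-round transition probability of the RZF Markov chain from blue set `B`
to blue set `C`: each white vertex independently turns blue with probability
`turnProb w B ·`, and blue vertices stay blue. -/
noncomputable def stepProb (w : V → V → ℝ≥0) (B C : Finset V) : ℝ≥0∞ :=
  if B ⊆ C then
    (∏ x ∈ C \ B, (turnProb w B x : ℝ≥0∞)) *
      ∏ x ∈ Cᶜ, (1 - (turnProb w B x : ℝ≥0∞))
  else 0

/-- Distribution of the blue set after `t` rounds, started from `S`. -/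
noncomputable def state (w : V → V → ℝ≥0) (S : Finset V) : ℕ → Finset V → ℝ≥0∞
  | 0 => fun C => if C = S then 1 else 0
  | t + 1 => fun C => ∑ B : Finset V, state w S t B * stepProb w B C

/-- Expected propagation time `∑ₜ P(Bₜ ≠ V(G))`; this equals `E[τ]` when the
all-blue state is reachable from `S`, and `∞` otherwise. -/
noncomputable def ept (w : V → V → ℝ≥0) (S : Finset V) : ℝ≥0∞ :=
  ∑' t : ℕ, ∑ C ∈ Finset.univ.filter (fun C : Finset V => C ≠ Finset.univ),
    state w S t C

/-- Minimum expected propagation time over singleton starting sets. -/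
noncomputable def eptMin (w : V → V → ℝ≥0) : ℝ≥0∞ :=
  ⨅ v : V, ept w {v}

/-- The weight function of an unweighted directed graph: weight `1` on each
edge and `0` otherwise, so that `turnProb` is the fraction of in-neighbors
that are blue. -/
def unweight (adj : V → V → Prop) [DecidableRel adj] : V → V → ℝ≥0 :=
  fun u v => if adj u v then 1 else 0

end RZF

/-- `reachIn adj t a b` : there is a directed path of length at most `t`
from `a` to `b` in the directed graph with adjacency relation `adj`. -/
def reachIn {V : Type*} (adj : V → V → Prop) : ℕ → V → V → Prop
  | 0, a, b => a = b
  | t + 1, a, b => reachIn adj t a b ∨ ∃ c, reachIn adj t a c ∧ adj c b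

/-- The weight function of the weighted bidirected cycle on `Fin n`: each
clockwise edge `(vᵢ, vᵢ₊₁)` has weight `p` and each counterclockwise edge
`(vᵢ, vᵢ₋₁)` has weight `q` (indices mod `n`). -/
noncomputable def cycleWeight (n : ℕ) (p q : ℝ≥0) : Fin n → Fin n → ℝ≥0 :=
  fun u v =>
    (if (v : ℕ) = ((u : ℕ) + 1) % n then p else 0) +
      (if ((v : ℕ) + 1) % n = (u : ℕ) then q else 0)


namespace RZFAux
open scoped ENNReal NNReal
open Finset RZF
open Fin.NatCast Fin.CommRing
variable {V : Type*} [Fintype V] [DecidableEq V]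

lemma turnProb_le_one (w : V → V → ℝ≥0) (B : Finset V) (x : V) : turnProb w B x ≤ 1 := by
  unfold RZF.turnProb
  rcases eq_or_ne (∑ u, w u x) 0 with h | h
  · simp [h]
  · exact (div_le_one (lt_of_le_of_ne zero_le (Ne.symm h))).2 (Finset.sum_le_sum_of_subset B.subset_univ)

lemma coe_add_sub (w : V → V → ℝ≥0) (B : Finset V) (x : V) :
    (turnProb w B x : ℝ≥0∞) + (1 - (turnProb w B x : ℝ≥0∞)) = 1 := by
  rw [add_comm, tsub_add_cancel_of_le]
  exact_mod_cast (turnProb_le_one w B x)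

lemma sum_step_mul (w : V → V → ℝ≥0) (B : Finset V) (φ : Finset V → ℝ≥0∞) :
    ∑ C, stepProb w B C * φ C =
      ∑ T ∈ Bᶜ.powerset,
        ((∏ x ∈ T, (turnProb w B x : ℝ≥0∞)) * ∏ x ∈ Bᶜ \ T, (1 - (turnProb w B x : ℝ≥0∞)))
          * φ (B ∪ T) := by
  rw [← Finset.sum_filter_of_ne (s := Finset.univ)
      (p := fun C => B ⊆ C) (f := fun C => stepProb w B C * φ C)
      (by intro C _ hC; by_contra hsub
          exact hC (by simp [RZF.stepProb, hsub]))]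
  refine Finset.sum_nbij' (fun C => C \ B) (fun T => B ∪ T) ?_ ?_ ?_ ?_ ?_
  · intro C hC
    simp only [mem_powerset]; intro x hx
    simp only [mem_sdiff] at hx; simp [hx.2]
  · intro T hT; simp [mem_filter]
  · intro C hC; simp only [mem_filter, mem_univ, true_and] at hC
    exact Finset.union_sdiff_of_subset hC
  · intro T hT; simp only [mem_powerset] at hT
    have hd : Disjoint B T := by
      rw [Finset.disjoint_left]; intro x hxB hxT
      exact (Finset.mem_compl.1 (hT hxT)) hxB
    simp only [Finset.union_sdiff_cancel_left hd]
  · intro C hC; simp only [mem_filter, mem_univ, true_and] at hC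
    rw [Finset.union_sdiff_of_subset hC, RZF.stepProb, if_pos hC]
    have hset : Cᶜ = Bᶜ \ (C \ B) := by
      ext x
      simp only [mem_compl, mem_sdiff]
      constructor
      · intro hx; exact ⟨fun hb => hx (hC hb), fun h2 => hx h2.1⟩
      · rintro ⟨h1, h2⟩ hxC; exact h2 ⟨hxC, h1⟩
    rw [hset]

lemma sum_step (w : V → V → ℝ≥0) (B : Finset V) : ∑ C, stepProb w B C = 1 := by
  have := sum_step_mul w B (fun _ => 1)
  simp only [mul_one] at this
  rw [this, ← Finset.prod_add]
  rw [Finset.prod_congr rfl (fun x _ => coe_add_sub w B x), Finset.prod_const_one]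

lemma pow_sum_card (s : Finset V) (f g : V → ℝ≥0∞) (h : ∀ x ∈ s, f x + g x = 1) :
    ∑ T ∈ s.powerset, ((∏ x ∈ T, f x) * ∏ x ∈ s \ T, g x) * (T.card : ℝ≥0∞)
      = ∑ x ∈ s, f x := by
  induction s using Finset.induction_on with
  | empty => simp
  | @insert a s ha ih =>
    rw [Finset.sum_powerset_insert ha]
    have key : ∀ T ∈ s.powerset,
        ((∏ x ∈ T, f x) * ∏ x ∈ insert a s \ T, g x) * (T.card : ℝ≥0∞)
          + ((∏ x ∈ insert a T, f x) * ∏ x ∈ insert a s \ insert a T, g x)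
              * ((insert a T).card : ℝ≥0∞)
          = ((∏ x ∈ T, f x) * ∏ x ∈ s \ T, g x) * (T.card : ℝ≥0∞)
            + f a * ((∏ x ∈ T, f x) * ∏ x ∈ s \ T, g x) := by
      intro T hT
      rw [mem_powerset] at hT
      have haT : a ∉ T := fun hh => ha (hT hh)
      have h1 : insert a s \ T = insert a (s \ T) := by
        rw [Finset.insert_sdiff_of_notMem _ haT]
      have h2 : insert a s \ insert a T = s \ T := by
        ext x
        simp only [mem_sdiff, mem_insert, not_or]
        constructor
        · rintro ⟨h3 | h3, h4, h5⟩
          · exact absurd h3 h4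
          · exact ⟨h3, h5⟩
        · rintro ⟨h3, h4⟩
          exact ⟨Or.inr h3, fun he => ha (he ▸ h3), h4⟩
      have haS : a ∉ s \ T := fun hh => ha (mem_sdiff.1 hh).1
      rw [h1, h2, Finset.prod_insert haT, Finset.prod_insert haS,
        Finset.card_insert_of_notMem haT]
      have hga : f a + g a = 1 := h a (mem_insert_self a s)
      push_cast
      calc (∏ x ∈ T, f x) * (g a * ∏ x ∈ s \ T, g x) * (T.card : ℝ≥0∞)
            + f a * (∏ x ∈ T, f x) * (∏ x ∈ s \ T, g x) * ((T.card : ℝ≥0∞) + 1)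
          = (f a + g a) * (((∏ x ∈ T, f x) * ∏ x ∈ s \ T, g x) * (T.card : ℝ≥0∞))
            + f a * ((∏ x ∈ T, f x) * ∏ x ∈ s \ T, g x) := by ring
        _ = _ := by rw [hga, one_mul]
    rw [← Finset.sum_add_distrib, Finset.sum_congr rfl key, Finset.sum_add_distrib, ← Finset.mul_sum,
      ih (fun x hx => h x (mem_insert_of_mem hx)), ← Finset.prod_add,
      Finset.prod_congr rfl (fun x hx => h x (mem_insert_of_mem hx)),
      Finset.prod_const_one, mul_one, Finset.sum_insert ha, add_comm (f a)]

lemma sum_step_card (w : V → V → ℝ≥0) (B : Finset V) :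
    ∑ C, stepProb w B C * (((C \ B).card : ℕ) : ℝ≥0∞)
      = ∑ x ∈ Bᶜ, (turnProb w B x : ℝ≥0∞) := by
  rw [sum_step_mul w B (fun C => (((C \ B).card : ℕ) : ℝ≥0∞))]
  rw [← pow_sum_card Bᶜ (fun x => (turnProb w B x : ℝ≥0∞))
      (fun x => 1 - (turnProb w B x : ℝ≥0∞)) (fun x _ => coe_add_sub w B x)]
  apply Finset.sum_congr rfl
  intro T hT
  rw [mem_powerset] at hT
  have hd : Disjoint B T := by
    rw [Finset.disjoint_left]; intro x hxB hxT
    exact (Finset.mem_compl.1 (hT hxT)) hxB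
  rw [Finset.union_sdiff_cancel_left hd]

lemma step_support {w : V → V → ℝ≥0} {B C : Finset V} (h : stepProb w B C ≠ 0) :
    B ⊆ C ∧ ∀ x ∈ C, x ∉ B → turnProb w B x ≠ 0 := by
  rw [RZF.stepProb] at h
  split at h
  · rename_i hBC
    refine ⟨hBC, fun x hxC hxB hz => ?_⟩
    apply h
    rw [mul_eq_zero]
    left
    exact Finset.prod_eq_zero (Finset.mem_sdiff.2 ⟨hxC, hxB⟩) (by simp [hz])
  · exact absurd rfl h

section Cycle
open Finset RZF

variable {n : ℕ} [NeZero n]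

/-- The arc of `k` consecutive vertices starting at `j`. -/
def arcF (n : ℕ) [NeZero n] (j : Fin n) (k : ℕ) : Finset (Fin n) :=
  (Finset.range k).image (fun i : ℕ => j + (i : Fin n))

lemma mem_arcF {j x : Fin n} {k : ℕ} :
    x ∈ arcF n j k ↔ ∃ i < k, x = j + (i : Fin n) := by
  simp [arcF, eq_comm]

lemma natCast_inj_of_lt {i i' : ℕ} (hi : i < n) (hi' : i' < n)
    (h : (i : Fin n) = (i' : Fin n)) : i = i' := by
  have := congrArg Fin.val h
  rwa [Fin.val_natCast, Fin.val_natCast, Nat.mod_eq_of_lt hi, Nat.mod_eq_of_lt hi'] at this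

lemma card_arcF {j : Fin n} {k : ℕ} (hk : k ≤ n) : (arcF n j k).card = k := by
  rw [arcF, Finset.card_image_of_injOn, Finset.card_range]
  intro i hi i' hi' he
  simp only [Finset.coe_range, Set.mem_Iio] at hi hi'
  exact natCast_inj_of_lt (lt_of_lt_of_le hi hk) (lt_of_lt_of_le hi' hk)
    (add_left_cancel he)

lemma arcF_univ (j : Fin n) : arcF n j n = Finset.univ :=
  Finset.eq_univ_of_card _ (by rw [card_arcF le_rfl, Fintype.card_fin])

lemma arcF_mono {j : Fin n} {k k' : ℕ} (h : k ≤ k') : arcF n j k ⊆ arcF n j k' :=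
  Finset.image_subset_image (Finset.range_subset_range.2 h)

lemma arcF_succ (j : Fin n) (k : ℕ) :
    arcF n j (k + 1) = insert (j + (k : Fin n)) (arcF n j k) := by
  ext x
  simp only [mem_arcF, Finset.mem_insert]
  constructor
  · rintro ⟨i, hi, rfl⟩
    rcases Nat.lt_or_ge i k with h | h
    · exact Or.inr ⟨i, h, rfl⟩
    · have : i = k := by omega
      exact Or.inl (by rw [this])
  · rintro (rfl | ⟨i, hi, rfl⟩)
    · exact ⟨k, Nat.lt_succ_self k, rfl⟩
    · exact ⟨i, Nat.lt_succ_of_lt hi, rfl⟩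

lemma arcF_pred (j : Fin n) (k : ℕ) :
    arcF n (j - 1) (k + 1) = insert (j - 1) (arcF n j k) := by
  ext x
  simp only [mem_arcF, Finset.mem_insert]
  constructor
  · rintro ⟨i, hi, rfl⟩
    rcases Nat.eq_zero_or_pos i with rfl | h
    · exact Or.inl (by simp)
    · refine Or.inr ⟨i - 1, by omega, ?_⟩
      have : (i : Fin n) = ((i - 1 : ℕ) : Fin n) + 1 := by
        conv_lhs => rw [show i = (i - 1) + 1 by omega]
        push_cast
        ring
      rw [this]
      ring
  · rintro (rfl | ⟨i, hi, rfl⟩)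
    · exact ⟨0, Nat.succ_pos k, by simp⟩
    · refine ⟨i + 1, by omega, ?_⟩
      push_cast
      ring

lemma boundary_right_not_mem {j : Fin n} {k : ℕ} (hkn : k < n) :
    j + (k : Fin n) ∉ arcF n j k := by
  rw [mem_arcF]
  rintro ⟨i, hi, he⟩
  have := natCast_inj_of_lt (by omega : i < n) hkn (add_left_cancel he.symm)
  omega

lemma boundary_left_not_mem {j : Fin n} {k : ℕ} (hkn : k < n) :
    j - 1 ∉ arcF n j k := by
  rw [mem_arcF]
  rintro ⟨i, hi, he⟩
  have h2 : j = j + ((i + 1 : ℕ) : Fin n) := by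
    push_cast
    rw [← add_assoc, ← he]
    ring
  have h3 : j + ((0 : ℕ) : Fin n) = j + ((i + 1 : ℕ) : Fin n) := by
    rw [← h2]
    simp
  have := natCast_inj_of_lt (Nat.pos_of_ne_zero (NeZero.ne n)) (by omega) (add_left_cancel h3)
  omega

lemma sub_one_mem_arc_iff {j x : Fin n} {k : ℕ} (hk1 : 1 ≤ k) (hkn : k < n)
    (hx : x ∉ arcF n j k) : x - 1 ∈ arcF n j k ↔ x = j + (k : Fin n) := by
  constructor
  · rw [mem_arcF]
    rintro ⟨i, hi, he⟩
    have hxe : x = j + ((i + 1 : ℕ) : Fin n) := by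
      push_cast
      rw [← add_assoc, ← he]
      ring
    rcases Nat.lt_or_ge (i + 1) k with h | h
    · exact absurd (mem_arcF.2 ⟨i + 1, h, hxe⟩) hx
    · have : i + 1 = k := by omega
      rw [← this]
      exact hxe
  · rintro rfl
    rw [mem_arcF]
    refine ⟨k - 1, by omega, ?_⟩
    have : (k : Fin n) = ((k - 1 : ℕ) : Fin n) + 1 := by
      conv_lhs => rw [show k = (k - 1) + 1 by omega]
      push_cast
      ring
    rw [this]
    ring

lemma add_one_mem_arc_iff {j x : Fin n} {k : ℕ} (hk1 : 1 ≤ k) (hkn : k < n)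
    (hx : x ∉ arcF n j k) : x + 1 ∈ arcF n j k ↔ x = j - 1 := by
  constructor
  · rw [mem_arcF]
    rintro ⟨i, hi, he⟩
    rcases Nat.eq_zero_or_pos i with rfl | h
    · simp only [Nat.cast_zero, add_zero] at he
      rw [← he]
      ring
    · exfalso
      apply hx
      rw [mem_arcF]
      refine ⟨i - 1, by omega, ?_⟩
      have h2 : (i : Fin n) = ((i - 1 : ℕ) : Fin n) + 1 := by
        conv_lhs => rw [show i = (i - 1) + 1 by omega]
        push_cast
        ring
      rw [h2, ← add_assoc] at he
      exact add_right_cancel he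
  · rintro rfl
    rw [mem_arcF]
    exact ⟨0, hk1, by simp⟩

end Cycle

section TP
open Finset RZF
variable {n : ℕ} [NeZero n] {p q : ℝ≥0}

lemma val_add_one_aux (hn : 3 ≤ n) (u : Fin n) :
    ((u + 1 : Fin n) : ℕ) = ((u : ℕ) + 1) % n := by
  rw [Fin.val_add, Fin.val_one', Nat.mod_eq_of_lt (show 1 < n by omega)]

lemma cycleWeight_apply (hn : 3 ≤ n) (u x : Fin n) :
    cycleWeight n p q u x = (if x = u + 1 then p else 0) + (if u = x + 1 then q else 0) := by
  have h1 : ((x : ℕ) = ((u : ℕ) + 1) % n) ↔ (x = u + 1) := by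
    constructor
    · intro h; exact Fin.ext (by rw [val_add_one_aux hn u]; exact h)
    · intro h; rw [h, val_add_one_aux hn u]
  have h2 : (((x : ℕ) + 1) % n = (u : ℕ)) ↔ (u = x + 1) := by
    constructor
    · intro h; exact Fin.ext (by rw [val_add_one_aux hn x]; exact h.symm)
    · intro h; rw [h, val_add_one_aux hn x]
  rw [cycleWeight]
  simp only [h1, h2]

lemma sum_cycleWeight_mem (hn : 3 ≤ n) (B : Finset (Fin n)) (x : Fin n) :
    ∑ u ∈ B, cycleWeight n p q u x
      = (if x - 1 ∈ B then p else 0) + (if x + 1 ∈ B then q else 0) := by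
  rw [Finset.sum_congr rfl (fun u _ => cycleWeight_apply hn u x), Finset.sum_add_distrib]
  congr 1
  · have h : ∀ u ∈ B, (if x = u + 1 then p else 0) = (if u = x - 1 then p else 0) := by
      intro u _
      congr 1
      rw [eq_iff_iff]
      constructor
      · intro h; rw [h]; ring
      · intro h; rw [h]; ring
    rw [Finset.sum_congr rfl h, Finset.sum_ite_eq' B (x - 1) (fun _ => p)]
  · rw [Finset.sum_ite_eq' B (x + 1) (fun _ => q)]

lemma sum_cycleWeight_univ (hn : 3 ≤ n) (x : Fin n) :
    ∑ u, cycleWeight n p q u x = p + q := by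
  rw [sum_cycleWeight_mem hn]
  simp

lemma turnProb_cycle (hn : 3 ≤ n) (B : Finset (Fin n)) (x : Fin n) :
    turnProb (cycleWeight n p q) B x
      = ((if x - 1 ∈ B then p else 0) + (if x + 1 ∈ B then q else 0)) / (p + q) := by
  rw [RZF.turnProb, sum_cycleWeight_mem hn, sum_cycleWeight_univ hn]

lemma sum_turnProb_arc (hn : 3 ≤ n) (hpq : p + q ≠ 0) (j : Fin n) {k : ℕ}
    (hk1 : 1 ≤ k) (hkn : k < n) :
    ∑ x ∈ (arcF n j k)ᶜ, turnProb (cycleWeight n p q) (arcF n j k) x = 1 := by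
  set B := arcF n j k with hB
  have key : ∀ x ∈ Bᶜ, turnProb (cycleWeight n p q) B x
      = ((if x = j + (k : Fin n) then p else 0) + (if x = j - 1 then q else 0)) / (p + q) := by
    intro x hx
    rw [Finset.mem_compl] at hx
    rw [turnProb_cycle hn]
    congr 2
    · congr 1
      rw [eq_iff_iff, sub_one_mem_arc_iff hk1 hkn hx]
    · congr 1
      rw [eq_iff_iff, add_one_mem_arc_iff hk1 hkn hx]
  rw [Finset.sum_congr rfl key]
  rw [← Finset.sum_div, Finset.sum_add_distrib,
    Finset.sum_ite_eq' Bᶜ (j + (k : Fin n)) (fun _ => p),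
    Finset.sum_ite_eq' Bᶜ (j - 1) (fun _ => q),
    if_pos (Finset.mem_compl.2 (boundary_right_not_mem hkn)),
    if_pos (Finset.mem_compl.2 (boundary_left_not_mem hkn)),
    div_self hpq]

lemma turnProb_cycle_ne_zero (hn : 3 ≤ n) {j : Fin n} {k : ℕ}
    (hk1 : 1 ≤ k) (hkn : k < n) {x : Fin n}
    (hx : x ∉ arcF n j k)
    (hne : turnProb (cycleWeight n p q) (arcF n j k) x ≠ 0) :
    x = j + (k : Fin n) ∨ x = j - 1 := by
  rw [turnProb_cycle hn] at hne
  by_contra hcon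
  push_neg at hcon
  apply hne
  rw [if_neg (fun h => hcon.1 ((sub_one_mem_arc_iff hk1 hkn hx).1 h)),
    if_neg (fun h => hcon.2 ((add_one_mem_arc_iff hk1 hkn hx).1 h))]
  simp

end TP

section StepArc
open Finset RZF
variable {n : ℕ} [NeZero n] {p q : ℝ≥0}

lemma arc_step_isArc (hn : 3 ≤ n) (j : Fin n) {k : ℕ} (hk1 : 1 ≤ k) (hkn : k ≤ n)
    {C : Finset (Fin n)} (h : stepProb (cycleWeight n p q) (arcF n j k) C ≠ 0) :
    ∃ j' k', 1 ≤ k' ∧ k' ≤ n ∧ C = arcF n j' k' := by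
  obtain ⟨hBC, hsupp⟩ := step_support h
  rcases Nat.eq_or_lt_of_le hkn with heq | hlt
  · subst heq
    rw [arcF_univ] at hBC
    exact ⟨j, k, hk1, le_rfl, by rw [arcF_univ, Finset.univ_subset_iff.1 hBC]⟩
  · have hCsub : ∀ x ∈ C, x ∉ arcF n j k → x = j + (k : Fin n) ∨ x = j - 1 :=
      fun x hxC hxB => turnProb_cycle_ne_zero hn hk1 hlt hxB (hsupp x hxC hxB)
    by_cases hu : (j - 1) ∈ C <;> by_cases hv : (j + (k : Fin n)) ∈ C
    · -- both endpoints
      have hC : C = insert (j - 1) (insert (j + (k : Fin n)) (arcF n j k)) := by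
        apply Finset.Subset.antisymm
        · intro x hx
          by_cases hxB : x ∈ arcF n j k
          · simp [hxB]
          · rcases hCsub x hx hxB with h' | h' <;> simp [h']
        · intro x hx
          simp only [Finset.mem_insert] at hx
          rcases hx with rfl | rfl | hx
          · exact hu
          · exact hv
          · exact hBC hx
      rcases Nat.lt_or_ge (k + 1) n with hk2 | hk2
      · refine ⟨j - 1, k + 2, by omega, by omega, ?_⟩
        rw [hC, show k + 2 = (k + 1) + 1 from rfl, arcF_pred j (k + 1), arcF_succ j k]
      · have hk2' : k = n - 1 := by omega
        have hvu : j + (k : Fin n) = j - 1 := by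
          rw [eq_sub_iff_add_eq, add_assoc]
          have hz : (k : Fin n) + 1 = 0 := by
            apply Fin.ext
            rw [val_add_one_aux hn, Fin.val_natCast, Fin.val_zero,
              Nat.mod_eq_of_lt hlt, hk2', Nat.sub_add_cancel (by omega), Nat.mod_self]
          rw [hz, add_zero]
        refine ⟨j - 1, k + 1, by omega, by omega, ?_⟩
        rw [hC, hvu, Finset.insert_idem, arcF_pred j k]
    · -- only left endpoint
      have hC : C = insert (j - 1) (arcF n j k) := by
        apply Finset.Subset.antisymm
        · intro x hx
          by_cases hxB : x ∈ arcF n j k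
          · simp [hxB]
          · rcases hCsub x hx hxB with h' | h'
            · exact absurd (h' ▸ hx) hv
            · simp [h']
        · intro x hx
          simp only [Finset.mem_insert] at hx
          rcases hx with rfl | hx
          · exact hu
          · exact hBC hx
      exact ⟨j - 1, k + 1, by omega, by omega, by rw [hC, arcF_pred j k]⟩
    · -- only right endpoint
      have hC : C = insert (j + (k : Fin n)) (arcF n j k) := by
        apply Finset.Subset.antisymm
        · intro x hx
          by_cases hxB : x ∈ arcF n j k
          · simp [hxB]
          · rcases hCsub x hx hxB with h' | h'
            · simp [h']
            · exact absurd (h' ▸ hx) hu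
        · intro x hx
          simp only [Finset.mem_insert] at hx
          rcases hx with rfl | hx
          · exact hv
          · exact hBC hx
      exact ⟨j, k + 1, by omega, by omega, by rw [hC, arcF_succ j k]⟩
    · -- neither
      refine ⟨j, k, hk1, hkn, Finset.Subset.antisymm ?_ hBC⟩
      intro x hx
      by_contra hxB
      rcases hCsub x hx hxB with h' | h'
      · exact hv (h' ▸ hx)
      · exact hu (h' ▸ hx)

end StepArc

section Chain
open Finset RZF Filter
variable {V : Type*} [Fintype V] [DecidableEq V]

lemma chain_main (w : V → V → ℝ≥0) (S : Finset V) (A : Finset V → Prop)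
    (hS : A S)
    (hstep : ∀ B C, A B → stepProb w B C ≠ 0 → A C)
    (hsum : ∀ B, A B → B ≠ Finset.univ →
      ∑ x ∈ Bᶜ, (turnProb w B x : ℝ≥0∞) = 1) :
    ept w S = ((Fintype.card V - S.card : ℕ) : ℝ≥0∞) := by
  set φ : Finset V → ℝ≥0∞ := fun C => ((Fintype.card V - C.card : ℕ) : ℝ≥0∞) with hφ
  set P : ℕ → ℝ≥0∞ := fun t => ∑ C ∈ Finset.univ.filter (fun C : Finset V => C ≠ Finset.univ),
    state w S t C with hP
  set M : ℕ → ℝ≥0∞ := fun t => ∑ C, state w S t C * φ C with hM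
  -- support invariant
  have inv : ∀ t C, state w S t C ≠ 0 → A C := by
    intro t
    induction t with
    | zero =>
      intro C hC
      rcases eq_or_ne C S with rfl | h
      · exact hS
      · rw [RZF.state] at hC
        simp [h] at hC
    | succ t ih =>
      intro C hC
      rw [RZF.state] at hC
      obtain ⟨B, _, hB⟩ := Finset.exists_ne_zero_of_sum_ne_zero hC
      rcases mul_ne_zero_iff.1 hB with ⟨h1, h2⟩
      exact hstep B C (ih B h1) h2
  -- per-state expected decrement
  have perB : ∀ B : Finset V, A B →
      (∑ C, stepProb w B C * φ C) + (if B = Finset.univ then 0 else 1) = φ B := by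
    intro B hAB
    by_cases hBu : B = Finset.univ
    · subst hBu
      rw [if_pos rfl, add_zero, sum_step_mul w Finset.univ φ]
      simp [hφ]
    · rw [if_neg hBu]
      have h1 : ∑ C, stepProb w B C * (((C \ B).card : ℕ) : ℝ≥0∞) = 1 := by
        rw [sum_step_card w B, hsum B hAB hBu]
      have h2 : ∀ C : Finset V,
          stepProb w B C * φ C + stepProb w B C * (((C \ B).card : ℕ) : ℝ≥0∞)
            = stepProb w B C * φ B := by
        intro C
        rcases eq_or_ne (stepProb w B C) 0 with hz | hz
        · rw [hz, zero_mul, zero_mul, zero_mul, add_zero]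
        · rw [← mul_add]
          congr 1
          obtain ⟨hBC, -⟩ := step_support hz
          have hcard : (Fintype.card V - C.card) + (C \ B).card
              = Fintype.card V - B.card := by
            rw [Finset.card_sdiff_of_subset hBC]
            have h3 := Finset.card_le_card hBC
            have h4 := Finset.card_le_univ C
            omega
          show ((Fintype.card V - C.card : ℕ) : ℝ≥0∞) + (((C \ B).card : ℕ) : ℝ≥0∞)
            = ((Fintype.card V - B.card : ℕ) : ℝ≥0∞)
          rw [← Nat.cast_add, hcard]
      calc (∑ C, stepProb w B C * φ C) + 1
          = (∑ C, stepProb w B C * φ C)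
              + ∑ C, stepProb w B C * (((C \ B).card : ℕ) : ℝ≥0∞) := by rw [h1]
        _ = ∑ C, (stepProb w B C * φ C
              + stepProb w B C * (((C \ B).card : ℕ) : ℝ≥0∞)) := by
            rw [Finset.sum_add_distrib]
        _ = ∑ C, stepProb w B C * φ B := Finset.sum_congr rfl (fun C _ => h2 C)
        _ = (∑ C, stepProb w B C) * φ B := by rw [Finset.sum_mul]
        _ = φ B := by rw [sum_step w B, one_mul]
  have Pform : ∀ t, P t = ∑ B, state w S t B * (if B = Finset.univ then 0 else 1) := by
    intro t
    simp only [hP]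
    rw [Finset.sum_filter]
    apply Finset.sum_congr rfl
    intro B _
    by_cases hB : B = Finset.univ <;> simp [hB]
  -- the key recursion  M (t+1) + P t = M t
  have keyM : ∀ t, M (t + 1) + P t = M t := by
    intro t
    have hM1 : M (t + 1) = ∑ B, state w S t B * ∑ C, stepProb w B C * φ C := by
      simp only [hM, RZF.state]
      calc ∑ C, (∑ B, state w S t B * stepProb w B C) * φ C
          = ∑ C, ∑ B, state w S t B * (stepProb w B C * φ C) := by
            refine Finset.sum_congr rfl (fun C _ => ?_)
            rw [Finset.sum_mul]
            exact Finset.sum_congr rfl (fun B _ => by ring)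
        _ = ∑ B, ∑ C, state w S t B * (stepProb w B C * φ C) := Finset.sum_comm
        _ = ∑ B, state w S t B * ∑ C, stepProb w B C * φ C := by
            exact Finset.sum_congr rfl (fun B _ => (Finset.mul_sum _ _ _).symm)
    rw [hM1, Pform t, ← Finset.sum_add_distrib]
    simp only [hM]
    apply Finset.sum_congr rfl
    intro B _
    rw [← mul_add]
    rcases eq_or_ne (state w S t B) 0 with hz | hz
    · rw [hz, zero_mul, zero_mul]
    · rw [perB B (inv t B hz)]
  -- telescoping
  have tel : ∀ T, M T + ∑ t ∈ Finset.range T, P t = M 0 := by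
    intro T
    induction T with
    | zero => simp
    | succ T ih =>
      rw [Finset.sum_range_succ, ← ih, ← keyM T]
      ring
  have M0 : M 0 = φ S := by
    simp only [hM, RZF.state]
    rw [Finset.sum_eq_single S]
    · simp
    · intro b _ hb
      rw [if_neg hb, zero_mul]
    · intro h
      exact absurd (Finset.mem_univ S) h
  -- P is antitone
  have Pmono : ∀ t, P (t + 1) ≤ P t := by
    intro t
    have h1 : P (t + 1) = ∑ B, state w S t B *
        ∑ C ∈ Finset.univ.filter (fun C : Finset V => C ≠ Finset.univ), stepProb w B C := by
      simp only [hP, RZF.state]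
      rw [Finset.sum_comm]
      exact Finset.sum_congr rfl (fun B _ => (Finset.mul_sum _ _ _).symm)
    rw [h1, Pform t]
    apply Finset.sum_le_sum
    intro B _
    apply mul_le_mul_right
    by_cases hB : B = Finset.univ
    · subst hB
      rw [if_pos rfl]
      rw [Finset.sum_eq_zero]
      intro C hC
      rw [Finset.mem_filter] at hC
      rw [RZF.stepProb, if_neg (fun hsub => hC.2 (Finset.univ_subset_iff.1 hsub))]
    · rw [if_neg hB]
      calc ∑ C ∈ Finset.univ.filter (fun C : Finset V => C ≠ Finset.univ), stepProb w B C
          ≤ ∑ C, stepProb w B C :=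
            Finset.sum_le_sum_of_subset (Finset.filter_subset _ _)
        _ = 1 := sum_step w B
  -- M is controlled by P
  have Mb : ∀ t, M t ≤ (Fintype.card V : ℝ≥0∞) * P t := by
    intro t
    rw [Pform t, Finset.mul_sum]
    simp only [hM]
    apply Finset.sum_le_sum
    intro C _
    by_cases hC : C = Finset.univ
    · subst hC
      simp [hφ, Finset.card_univ]
    · rw [if_neg hC, mul_one]
      calc state w S t C * φ C ≤ state w S t C * (Fintype.card V : ℝ≥0∞) := by
            apply mul_le_mul_right
            simp only [hφ]
            exact_mod_cast Nat.sub_le _ _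
        _ = (Fintype.card V : ℝ≥0∞) * state w S t C := mul_comm _ _
  -- conclusion
  have hept : ept w S = ∑' t, P t := rfl
  have hub : ∀ T, ∑ t ∈ Finset.range T, P t ≤ φ S := by
    intro T
    rw [← M0, ← tel T]
    exact le_add_self
  have hsum_le : ∑' t, P t ≤ φ S := by
    rw [ENNReal.tsum_eq_iSup_nat]
    exact iSup_le hub
  have hne : ∑' t, P t ≠ ⊤ := by
    refine ne_top_of_le_ne_top ?_ hsum_le
    simp [hφ]
  have hP0 : Filter.Tendsto P atTop (nhds 0) :=
    ENNReal.tendsto_atTop_zero_of_tsum_ne_top hne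
  have h2 : Filter.Tendsto
      (fun T => (∑ t ∈ Finset.range T, P t) + (Fintype.card V : ℝ≥0∞) * P T) atTop
      (nhds ((∑' t, P t) + (Fintype.card V : ℝ≥0∞) * 0)) :=
    (ENNReal.tendsto_nat_tsum P).add
      (ENNReal.Tendsto.const_mul hP0 (Or.inr (ENNReal.natCast_ne_top _)))
  rw [mul_zero, add_zero] at h2
  have hge : φ S ≤ ∑' t, P t := by
    refine ge_of_tendsto' h2 (fun T => ?_)
    calc φ S = M T + ∑ t ∈ Finset.range T, P t := by rw [tel T, M0]
      _ ≤ (Fintype.card V : ℝ≥0∞) * P T + ∑ t ∈ Finset.range T, P t :=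
          add_le_add_left (Mb T) _
      _ = (∑ t ∈ Finset.range T, P t) + (Fintype.card V : ℝ≥0∞) * P T := add_comm _ _
  rw [hept, le_antisymm hsum_le hge, hφ]

end Chain

end RZFAux

open Fin.NatCast Fin.CommRing

/-- For the weighted bidirected cycle on `n` vertices with
clockwise weights `p > 0` and counterclockwise weights `q > 0`, started from
`k` consecutive vertices (`1 ≤ k ≤ n`), the expected propagation time is
`n - k`; in particular it is independent of `p` and `q`. -/
theorem rzf_cycle_ept (n k : ℕ) (hn : 3 ≤ n) (hk1 : 1 ≤ k) (hkn : k ≤ n)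
    (p q : ℝ≥0) (hp : 0 < p) (hq : 0 < q) (j : ℕ) :
    RZF.ept (cycleWeight n p q)
        ((Finset.range k).image (fun i => (⟨(j + i) % n, Nat.mod_lt _ (by omega)⟩ : Fin n))) =
      ((n - k : ℕ) : ℝ≥0∞) := by
  haveI : NeZero n := ⟨by omega⟩
  have hS : (Finset.range k).image
      (fun i => (⟨(j + i) % n, Nat.mod_lt _ (by omega)⟩ : Fin n))
      = RZFAux.arcF n (j : Fin n) k := by
    apply Finset.image_congr
    intro i _
    apply Fin.ext
    rw [Fin.val_add, Fin.val_natCast, Fin.val_natCast, ← Nat.add_mod]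
  rw [hS]
  have hmain := RZFAux.chain_main (cycleWeight n p q) (RZFAux.arcF n (j : Fin n) k)
    (fun C => ∃ j' k', 1 ≤ k' ∧ k' ≤ n ∧ C = RZFAux.arcF n j' k')
    ⟨(j : Fin n), k, hk1, hkn, rfl⟩
    (by
      rintro B C ⟨j', k', hk1', hkn', rfl⟩ hne
      exact RZFAux.arc_step_isArc hn j' hk1' hkn' hne)
    (by
      rintro B ⟨j', k', hk1', hkn', rfl⟩ hBu
      have hklt : k' < n :=
        lt_of_le_of_ne hkn' (fun h => hBu (by rw [h, RZFAux.arcF_univ]))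
      have hpq : p + q ≠ 0 := (add_pos hp hq).ne'
      rw [← ENNReal.coe_finset_sum,
        RZFAux.sum_turnProb_arc hn hpq j' hk1' hklt, ENNReal.coe_one])
  rw [hmain, Fintype.card_fin, RZFAux.card_arcF hkn]
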